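/- Let ω(n) denote the number of distinct prime factors of n. There exists a family F : ℕ → ℕ → ℕ such that the map (i, j) ↦ F(i, j) is injective and ω(F(i, j+1)) = F(i, j) for all i, j. Hence there are infinitely many pairwise disjoint infinite ω-anti-orbit sequences, i.e. the infinite anti-orbit number of ω is +∞. -/

import Mathlib

open Finset ArithmeticFunction
open scoped ArithmeticFunction.omega

private noncomputable def Sf (m : ℕ) : Finset ℕ := (Finset.Ico 1 m).image (Nat.nth Nat.Prime)

private noncomputable def Qf (m : ℕ) : ℕ := ∏ p ∈ Sf m, p

private noncomputable def Nn (m s : ℕ) : ℕ := 2 ^ s * Qf m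

private lemma mem_Sf_prime {m p : ℕ} (hp : p ∈ Sf m) : p.Prime := by
  simp only [Sf, mem_image] at hp
  obtain ⟨k, _, rfl⟩ := hp
  exact Nat.prime_nth_prime k

private lemma two_not_mem_Sf (m : ℕ) : 2 ∉ Sf m := by
  simp only [Sf, mem_image, mem_Ico]
  rintro ⟨k, ⟨hk, _⟩, hnk⟩
  have h0 : Nat.nth Nat.Prime 0 < Nat.nth Nat.Prime k :=
    (Nat.nth_strictMono Nat.infinite_setOf_prime) hk
  rw [Nat.nth_prime_zero_eq_two, hnk] at h0
  exact lt_irrefl _ h0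

private lemma Qf_pos (m : ℕ) : 0 < Qf m :=
  Finset.prod_pos fun p hp => (mem_Sf_prime hp).pos

private lemma card_Sf (m : ℕ) : (Sf m).card = m - 1 := by
  rw [Sf, Finset.card_image_of_injective _
    (Nat.nth_injective Nat.infinite_setOf_prime), Nat.card_Ico]

private lemma omega_eq_card (n : ℕ) : ω n = n.primeFactors.card := by
  rw [cardDistinctFactors_apply, Nat.primeFactors, List.card_toFinset]

private lemma primeFactors_Qf (m : ℕ) : (Qf m).primeFactors = Sf m :=
  Nat.primeFactors_prod fun _ hp => mem_Sf_prime hp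

private lemma omega_Nn {m : ℕ} (hm : 1 ≤ m) (s : ℕ) : ω (Nn m (s + 1)) = m := by
  rw [omega_eq_card, Nn, Nat.primeFactors_mul (by positivity) (Qf_pos m).ne',
    Nat.primeFactors_prime_pow (by omega) Nat.prime_two, primeFactors_Qf]
  rw [show ({2} ∪ Sf m : Finset ℕ) = insert 2 (Sf m) from rfl,
    Finset.card_insert_of_notMem (two_not_mem_Sf m), card_Sf]
  omega

private lemma Nn_injective_right {m s s' : ℕ} (h : Nn m s = Nn m s') : s = s' := by
  have h2 : (2:ℕ) ^ s = 2 ^ s' :=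
    Nat.eq_of_mul_eq_mul_right (Qf_pos m) h
  exact Nat.pow_right_injective le_rfl h2

private noncomputable def Ff (i : ℕ) : ℕ → ℕ
  | 0 => 2 * i + 1
  | j + 1 => Nn (Ff i j) (Nat.pair i j + 1)

private lemma Ff_zero (i : ℕ) : Ff i 0 = 2 * i + 1 := rfl

private lemma Ff_succ (i j : ℕ) : Ff i (j + 1) = Nn (Ff i j) (Nat.pair i j + 1) := rfl

private lemma Ff_pos (i j : ℕ) : 1 ≤ Ff i j := by
  cases j with
  | zero => simp [Ff_zero]
  | succ j =>
    rw [Ff_succ]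
    have := Qf_pos (Ff i j)
    have : 0 < Nn (Ff i j) (Nat.pair i j + 1) := by
      unfold Nn; positivity
    omega

private lemma omega_Ff (i j : ℕ) : ω (Ff i (j + 1)) = Ff i j :=
  omega_Nn (Ff_pos i j) _

private lemma two_dvd_Ff_succ (i j : ℕ) : 2 ∣ Ff i (j + 1) := by
  show 2 ∣ Nn (Ff i j) (Nat.pair i j + 1)
  exact Dvd.dvd.mul_right (dvd_pow_self 2 (Nat.succ_ne_zero _)) _

/-- For `ω`, the number of distinct prime factors, there is a family
`F : ℕ → ℕ → ℕ` with `(i, j) ↦ F i j` injective and `ω (F i (j+1)) = F i j`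
for all `i, j`: infinitely many pairwise disjoint infinite `ω`-anti-orbit sequences,
so the infinite anti-orbit number of `ω` is `+∞`. -/
theorem stmt_7 :
    ∃ F : ℕ → ℕ → ℕ, (Function.Injective fun p : ℕ × ℕ => F p.1 p.2) ∧
      ∀ i j : ℕ, ArithmeticFunction.cardDistinctFactors (F i (j + 1)) = F i j := by
  refine ⟨Ff, ?_, omega_Ff⟩
  rintro ⟨i, j⟩ ⟨i', j'⟩ h
  simp only at h
  cases j with
  | zero =>
    cases j' with
    | zero =>
      rw [Ff_zero, Ff_zero] at h
      have : i = i' := by omega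
      simp [this]
    | succ j' =>
      exfalso
      have := two_dvd_Ff_succ i' j'
      rw [← h] at this
      rw [Ff_zero] at this
      obtain ⟨c, hc⟩ := this
      omega
  | succ j =>
    cases j' with
    | zero =>
      exfalso
      have := two_dvd_Ff_succ i j
      rw [h] at this
      rw [Ff_zero] at this
      obtain ⟨c, hc⟩ := this
      omega
    | succ j' =>
      have hm : Ff i j = Ff i' j' := by
        rw [← omega_Ff i j, ← omega_Ff i' j', h]
      have h' : Nn (Ff i j) (Nat.pair i j + 1) = Nn (Ff i j) (Nat.pair i' j' + 1) := by
        rw [Ff_succ, Ff_succ, ← hm] at h; exact h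
      have hs := Nn_injective_right h'
      have hp : Nat.pair i j = Nat.pair i' j' := by omega
      rw [Nat.pair_eq_pair] at hp
      simp [hp.1, hp.2]
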